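/- Let α be a sum of k roots of unity (in the algebraic integers), and let N be a non-zero integer. If N divides α in the ring of algebraic integers, then either α = 0 or k ≥ |N|. -/

import Mathlib

/-- A complex number is a root of unity if some positive power of it equals 1. -/
def IsRootOfUnity (z : ℂ) : Prop := ∃ n : ℕ, 0 < n ∧ z ^ n = 1

lemma abs_of_rootOfUnity {z : ℂ} (h : IsRootOfUnity z) : ‖z‖ = 1 := by
  obtain ⟨n, hn, hzn⟩ := h
  have h1 : ‖z‖ ^ n = 1 := by
    rw [← norm_pow, hzn, norm_one]
  have h0 : (0:ℝ) ≤ ‖z‖ := norm_nonneg z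
  rcases (pow_eq_one_iff_cases.mp h1) with h | h | h
  · omega
  · exact h
  · nlinarith [h.1]

/-- If `α` is a sum of `k` roots of unity and a non-zero integer `N` divides `α`
in the ring of algebraic integers, then `α = 0` or `k ≥ |N|`. -/
theorem sum_of_roots_of_unity_divisible (k : ℕ) (α : ℂ) (N : ℤ)
    (hN : N ≠ 0)
    (hsum : ∃ f : Fin k → ℂ, (∀ i, IsRootOfUnity (f i)) ∧ α = ∑ i, f i)
    (hdvd : ∃ β : ℂ, IsIntegral ℤ β ∧ α = (N : ℂ) * β) :
    α = 0 ∨ (|N| : ℤ) ≤ (k : ℤ) := by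
  obtain ⟨f, hf, hα⟩ := hsum
  obtain ⟨β, hβint, hαβ⟩ := hdvd
  by_cases hα0 : α = 0
  · exact Or.inl hα0
  right
  have hβ0 : β ≠ 0 := by
    rintro rfl; rw [mul_zero] at hαβ; exact hα0 hαβ
  -- the set of generators
  set S : Set ℂ := Set.range f ∪ {β} with hS
  have hSfin : S.Finite := (Set.finite_range f).union (Set.finite_singleton β)
  haveI : Finite ↥S := hSfin.to_subtype
  have hSint : ∀ x ∈ S, IsIntegral ℚ x := by
    rintro x (⟨i, rfl⟩ | rfl)
    · obtain ⟨n, hn, hzn⟩ := hf i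
      have : IsIntegral ℤ (f i) := by
        refine IsIntegral.of_pow hn ?_
        rw [hzn]; exact isIntegral_one
      exact this.tower_top
    · exact hβint.tower_top
  set K : IntermediateField ℚ ℂ := IntermediateField.adjoin ℚ S with hK
  haveI : FiniteDimensional ℚ K := IntermediateField.finiteDimensional_adjoin hSint
  have hβK : β ∈ K := IntermediateField.subset_adjoin ℚ S (Or.inr rfl)
  have hfK : ∀ i, f i ∈ K := fun i =>
    IntermediateField.subset_adjoin ℚ S (Or.inl ⟨i, rfl⟩)
  set b : K := ⟨β, hβK⟩ with hb
  set g : Fin k → K := fun i => ⟨f i, hfK i⟩ with hg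
  have hb0 : b ≠ 0 := fun h => hβ0 (congrArg Subtype.val h)
  have hbint : IsIntegral ℤ b := by
    rw [← isIntegral_algebraMap_iff (algebraMap K ℂ).injective]
    exact hβint
  -- the norm of b is a nonzero integer
  set n : ℚ := Algebra.norm ℚ b with hn
  have hnint : IsIntegral ℤ n := Algebra.isIntegral_norm ℚ hbint
  obtain ⟨m, hm⟩ := IsIntegrallyClosed.isIntegral_iff.mp hnint
  have hn0 : n ≠ 0 := by
    rw [hn, Algebra.norm_ne_zero_iff]; exact hb0
  have hm0 : m ≠ 0 := by rintro rfl; simp at hm; exact hn0 hm.symm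
  have h1n : (1:ℝ) ≤ |(n : ℝ)| := by
    have h1 : (1:ℤ) ≤ |m| := Int.one_le_abs hm0
    have hmn : (m:ℚ) = n := hm
    have h2 : (1:ℚ) ≤ |n| := by rw [← hmn]; exact_mod_cast h1
    exact_mod_cast h2
  -- norm as product of embeddings
  have hprod : ‖(algebraMap ℚ ℂ) n‖ = ∏ σ : K →ₐ[ℚ] ℂ, ‖σ b‖ := by
    rw [Algebra.norm_eq_prod_embeddings, norm_prod]
  -- there is an embedding with |σ b| ≥ 1
  have habsn : ‖(algebraMap ℚ ℂ) n‖ = |(n : ℝ)| := by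
    have : (algebraMap ℚ ℂ) n = ((n:ℝ):ℂ) := by push_cast; simp
    rw [this, Complex.norm_real, Real.norm_eq_abs]
  have hexists : ∃ σ : K →ₐ[ℚ] ℂ, 1 ≤ ‖σ b‖ := by
    by_contra h
    push_neg at h
    have hne : (Finset.univ : Finset (K →ₐ[ℚ] ℂ)).Nonempty := by
      haveI : Nonempty (K →ₐ[ℚ] ℂ) := by
        have : Algebra.IsAlgebraic ℚ K := Algebra.IsAlgebraic.of_finite ℚ K
        exact ⟨IsAlgClosed.lift (M := ℂ)⟩
      exact Finset.univ_nonempty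
    have hlt : ∏ σ : K →ₐ[ℚ] ℂ, ‖σ b‖ < ∏ _σ : K →ₐ[ℚ] ℂ, (1:ℝ) := by
      refine Finset.prod_lt_prod_of_nonempty ?_ (fun σ _ => h σ) hne
      intro σ _
      have : σ b ≠ 0 := by
        simp only [ne_eq, map_eq_zero]; exact hb0
      exact norm_pos_iff.mpr this
    simp only [Finset.prod_const_one] at hlt
    rw [← hprod, habsn] at hlt
    linarith
  obtain ⟨σ, hσ⟩ := hexists
  -- σ (sum) = N * σ b and has absolute value ≤ k
  have hsum_eq : (∑ i, g i : K) = (N : K) * b := by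
    apply Subtype.ext
    push_cast
    rw [← hα]
    exact hαβ
  have hσsum : σ (∑ i, g i) = (N : ℂ) * σ b := by
    rw [hsum_eq, map_mul, map_intCast]
  have hbound : ‖σ (∑ i, g i)‖ ≤ (k : ℝ) := by
    rw [map_sum]
    calc ‖∑ i, σ (g i)‖ ≤ ∑ i, ‖σ (g i)‖ :=
          norm_sum_le _ _
      _ = ∑ _i : Fin k, (1:ℝ) := by
          refine Finset.sum_congr rfl fun i _ => ?_
          refine abs_of_rootOfUnity ?_
          obtain ⟨m', hm', hmz⟩ := hf i
          refine ⟨m', hm', ?_⟩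
          rw [← map_pow]
          have : (g i) ^ m' = 1 := by
            apply Subtype.ext; push_cast; exact hmz
          rw [this, map_one]
      _ = (k : ℝ) := by simp
  have hNb : (|N| : ℝ) * ‖σ b‖ ≤ (k:ℝ) := by
    have : ‖(N : ℂ) * σ b‖ = (|N| : ℝ) * ‖σ b‖ := by
      rw [norm_mul]
      congr 1
      rw [Complex.norm_intCast]
    rw [← this, ← hσsum]; exact hbound
  have hfinal : (|N| : ℝ) ≤ (k : ℝ) := by
    have h1 : (|N| : ℝ) = (|N| : ℝ) * 1 := by ring
    calc (|N| : ℝ) = (|N| : ℝ) * 1 := by ring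
      _ ≤ (|N| : ℝ) * ‖σ b‖ := by
          apply mul_le_mul_of_nonneg_left hσ
          positivity
      _ ≤ (k : ℝ) := hNb
  exact_mod_cast hfinal
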